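/- Let X be a random variable with |X| ≤ M almost surely for some M > 0, let N ~ N(0,1) be independent of X, let Y = X + N have density p_Y = e^{−Q}. Set λ := M + 2. Then for every y > M + 4: 1 < (M² + 5M + 8)/(2(M+2)) ≤ Q′(λy)/Q′(y) ≤ (M² + 7M + 8)/4. -/

import Mathlib

open MeasureTheory ProbabilityTheory Real Filter

/-- Core bounds: `y - M ≤ Q'(y) ≤ y + M` for all `y`. -/
lemma aux_deriv_Q_bounds
    {Ω : Type*} [MeasurableSpace Ω] (μ : Measure Ω) [IsProbabilityMeasure μ]
    (X : Ω → ℝ) (hXmeas : Measurable X)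
    (M : ℝ) (hM : 0 < M) (hXbdd : ∀ᵐ ω ∂μ, |X ω| ≤ M)
    (pY Q : ℝ → ℝ)
    (hpY : ∀ y, pY y = (Real.sqrt (2 * π))⁻¹ * ∫ ω, Real.exp (-(y - X ω) ^ 2 / 2) ∂μ)
    (hQ : ∀ y, Q y = -Real.log (pY y)) :
    ∀ y : ℝ, y - M ≤ deriv Q y ∧ deriv Q y ≤ y + M := by
  intro y
  set c : ℝ := (Real.sqrt (2 * π))⁻¹ with hc
  have hc_pos : 0 < c := by
    rw [hc]
    exact inv_pos.2 (Real.sqrt_pos.2 (by positivity))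
  -- the functions
  set F : ℝ → Ω → ℝ := fun z ω => Real.exp (-(z - X ω) ^ 2 / 2) with hF
  set G : ℝ → Ω → ℝ := fun z ω => (X ω - z) * Real.exp (-(z - X ω) ^ 2 / 2) with hG
  have hFmeas : ∀ z, AEStronglyMeasurable (F z) μ := fun z =>
    ((measurable_const.sub hXmeas).pow_const 2 |>.neg.div_const 2 |>.exp).aestronglyMeasurable
  have hGmeas : ∀ z, AEStronglyMeasurable (G z) μ := fun z =>
    ((hXmeas.sub measurable_const).mul
      ((measurable_const.sub hXmeas).pow_const 2 |>.neg.div_const 2 |>.exp)).aestronglyMeasurable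
  have hFle1 : ∀ z ω, F z ω ≤ 1 := by
    intro z ω
    rw [hF]
    apply Real.exp_le_one_iff.2
    have : (0:ℝ) ≤ (z - X ω) ^ 2 := sq_nonneg _
    linarith
  have hFpos : ∀ z ω, 0 < F z ω := fun z ω => Real.exp_pos _
  have hFint : ∀ z, Integrable (F z) μ := by
    intro z
    refine ⟨hFmeas z, HasFiniteIntegral.of_bounded (C := 1) ?_⟩
    filter_upwards with ω
    rw [Real.norm_eq_abs, abs_of_pos (hFpos z ω)]
    exact hFle1 z ω
  have hGint : ∀ z, Integrable (G z) μ := by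
    intro z
    refine ⟨hGmeas z, HasFiniteIntegral.of_bounded (C := M + |z|) ?_⟩
    filter_upwards [hXbdd] with ω hω
    rw [hG]
    simp only [Real.norm_eq_abs, abs_mul]
    calc |X ω - z| * |Real.exp (-(z - X ω) ^ 2 / 2)|
        ≤ (M + |z|) * 1 := by
          apply mul_le_mul
          · calc |X ω - z| ≤ |X ω| + |z| := abs_sub _ _
              _ ≤ M + |z| := by linarith
          · rw [abs_of_pos (Real.exp_pos _)]
            exact hFle1 z ω
          · positivity
          · positivity
      _ = M + |z| := mul_one _
  -- positivity of the integral of F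
  have hIpos : ∀ z, 0 < ∫ ω, F z ω ∂μ := by
    intro z
    have hlow : ∀ᵐ ω ∂μ, Real.exp (-(|z| + M) ^ 2 / 2) ≤ F z ω := by
      filter_upwards [hXbdd] with ω hω
      rw [hF]
      apply Real.exp_le_exp.2
      have h1 : |z - X ω| ≤ |z| + M := by
        calc |z - X ω| ≤ |z| + |X ω| := abs_sub _ _
          _ ≤ |z| + M := by linarith
      have h2 : (z - X ω) ^ 2 ≤ (|z| + M) ^ 2 := by
        rw [← sq_abs (z - X ω)]
        exact pow_le_pow_left₀ (abs_nonneg _) h1 2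
      linarith
    calc (0:ℝ) < Real.exp (-(|z| + M) ^ 2 / 2) := Real.exp_pos _
      _ = ∫ _ω, Real.exp (-(|z| + M) ^ 2 / 2) ∂μ := by simp
      _ ≤ ∫ ω, F z ω ∂μ := integral_mono_ae (integrable_const _) (hFint z) hlow
  -- differentiation under the integral sign
  have hderivI : HasDerivAt (fun z => ∫ ω, F z ω ∂μ) (∫ ω, G y ω ∂μ) y := by
    have := hasDerivAt_integral_of_dominated_loc_of_deriv_le (μ := μ) (F := F) (F' := G)
      (x₀ := y) (bound := fun ω => M + |y| + 1) (s := Metric.ball y 1) (Metric.ball_mem_nhds y one_pos)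
      (Eventually.of_forall hFmeas) (hFint y) (hGmeas y) ?_ (integrable_const _) ?_
    · exact this.2
    · filter_upwards [hXbdd] with ω hω z hz
      rw [hG]
      simp only [Real.norm_eq_abs, abs_mul]
      have hz1 : |z - y| < 1 := by simpa [Real.dist_eq] using hz
      calc |X ω - z| * |Real.exp (-(z - X ω) ^ 2 / 2)|
          ≤ (M + |y| + 1) * 1 := by
            apply mul_le_mul
            · have : |X ω - z| ≤ |X ω| + |z - y| + |y| := by
                calc |X ω - z| = |(X ω) + (y - z) + (-y)| := by ring_nf
                  _ ≤ |X ω + (y - z)| + |(-y)| := abs_add_le _ _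
                  _ ≤ |X ω| + |y - z| + |y| := by
                      have := abs_add_le (X ω) (y - z)
                      simp only [abs_neg]
                      linarith
                  _ = |X ω| + |z - y| + |y| := by rw [abs_sub_comm]
              linarith
            · rw [abs_of_pos (Real.exp_pos _)]
              exact hFle1 z ω
            · positivity
            · positivity
        _ = M + |y| + 1 := mul_one _
    · filter_upwards with ω z _hz
      have h1 : HasDerivAt (fun z : ℝ => -(z - X ω) ^ 2 / 2) (X ω - z) z := by
        have := (((hasDerivAt_id z).sub_const (X ω)).pow 2).neg.div_const 2
        refine this.congr_deriv ?_
        simp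
        ring
      have h2 := h1.exp
      refine h2.congr_deriv ?_
      show _ = (X ω - z) * Real.exp (-(z - X ω) ^ 2 / 2)
      ring
  -- derivative of Q
  set B : ℝ := ∫ ω, F y ω ∂μ with hB
  set A : ℝ := ∫ ω, G y ω ∂μ with hA
  have hBpos : 0 < B := hIpos y
  have hpYpos : 0 < c * B := mul_pos hc_pos hBpos
  have hderivP : HasDerivAt (fun z => c * ∫ ω, F z ω ∂μ) (c * A) y := hderivI.const_mul c
  have hderivQ : HasDerivAt (fun z => -Real.log (c * ∫ ω, F z ω ∂μ)) (-(c * A / (c * B))) y :=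
    (hderivP.log (ne_of_gt hpYpos)).neg
  have hQeq : Q = fun z => -Real.log (c * ∫ ω, F z ω ∂μ) := by
    funext z
    rw [hQ, hpY]
  have hQd : deriv Q y = (-A) / B := by
    rw [hQeq, hderivQ.deriv, mul_div_mul_left A B (ne_of_gt hc_pos), neg_div]
  -- express -A
  have hnegA : -A = ∫ ω, (y - X ω) * F y ω ∂μ := by
    rw [hA, ← integral_neg]
    apply integral_congr_ae
    filter_upwards with ω
    show -(G y ω) = _
    rw [hG]
    ring
  have hmixint : Integrable (fun ω => (y - X ω) * F y ω) μ := by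
    apply (hGint y).neg.congr
    filter_upwards with ω
    show -(G y ω) = _
    rw [hG]
    ring
  -- bounds
  have hub : ∫ ω, (y - X ω) * F y ω ∂μ ≤ (y + M) * B := by
    rw [hB, ← integral_const_mul]
    apply integral_mono_ae hmixint ((hFint y).const_mul _)
    filter_upwards [hXbdd] with ω hω
    exact mul_le_mul_of_nonneg_right (by linarith [(abs_le.1 hω).1]) (hFpos y ω).le
  have hlb : (y - M) * B ≤ ∫ ω, (y - X ω) * F y ω ∂μ := by
    rw [hB, ← integral_const_mul]
    apply integral_mono_ae ((hFint y).const_mul _) hmixint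
    filter_upwards [hXbdd] with ω hω
    exact mul_le_mul_of_nonneg_right (by linarith [(abs_le.1 hω).2]) (hFpos y ω).le
  constructor
  · rw [hQd, le_div_iff₀ hBpos, hnegA]
    exact hlb
  · rw [hQd, div_le_iff₀ hBpos, hnegA]
    exact hub

theorem deriv_ratio_bounds_bounded_input
    {Ω : Type*} [MeasurableSpace Ω] (μ : Measure Ω) [IsProbabilityMeasure μ]
    (X N : Ω → ℝ) (hXmeas : Measurable X) (hNmeas : Measurable N)
    (M : ℝ) (hM : 0 < M) (hXbdd : ∀ᵐ ω ∂μ, |X ω| ≤ M)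
    (hN : Measure.map N μ = gaussianReal 0 1)
    (hindep : IndepFun X N μ)
    (pY Q : ℝ → ℝ)
    (hpY : ∀ y, pY y = (Real.sqrt (2 * π))⁻¹ * ∫ ω, Real.exp (-(y - X ω) ^ 2 / 2) ∂μ)
    (hQ : ∀ y, Q y = -Real.log (pY y)) :
    ∀ y : ℝ, M + 4 < y →
      1 < (M ^ 2 + 5 * M + 8) / (2 * (M + 2)) ∧
      (M ^ 2 + 5 * M + 8) / (2 * (M + 2)) ≤ deriv Q ((M + 2) * y) / deriv Q y ∧
      deriv Q ((M + 2) * y) / deriv Q y ≤ (M ^ 2 + 7 * M + 8) / 4 := by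
  intro y hy
  obtain ⟨hb1, hb2⟩ := aux_deriv_Q_bounds μ X hXmeas M hM hXbdd pY Q hpY hQ y
  obtain ⟨ha1, ha2⟩ := aux_deriv_Q_bounds μ X hXmeas M hM hXbdd pY Q hpY hQ ((M + 2) * y)
  set a := deriv Q ((M + 2) * y)
  set b := deriv Q y
  have hbpos : 0 < b := by nlinarith
  have hapos : 0 < a := by nlinarith
  have hMpos : 0 < 2 * (M + 2) := by linarith
  refine ⟨?_, ?_, ?_⟩
  · rw [one_lt_div hMpos]
    nlinarith
  · rw [div_le_div_iff₀ hMpos hbpos]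
    nlinarith
  · rw [div_le_div_iff₀ hbpos (by norm_num : (0:ℝ) < 4)]
    nlinarith [mul_pos (mul_pos hM (by linarith : (0:ℝ) < M + 3)) (by linarith : (0:ℝ) < y - M - 4)]
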